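/- The map t ↦ Σᵢ βᵢ(t), where β(t) is defined by the backward recursion βᵢ(t) = ((2^t−1)/(P hᵢ))(P hᵢ Σ_{l=i+1}^N β_l(t) + σ²), is strictly increasing and continuous in t on (0, ∞), with limit 0 as t → 0⁺. -/

import Mathlib

open Finset Real Filter

/-- `t ↦ ∑ᵢ βᵢ(t)`, with `β(t)` given by the backward recursion,
is strictly increasing and continuous on `(0,∞)` and tends to `0` as `t → 0⁺`. -/
theorem noma_total_power_strict_mono (N : ℕ) (hN : 1 ≤ N) (P σ2 : ℝ)
    (hP : 0 < P) (hσ : 0 < σ2) (h : Fin N → ℝ) (hh : ∀ i, 0 < h i)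
    (B : ℝ → Fin N → ℝ)
    (hrec : ∀ t > (0 : ℝ), ∀ i : Fin N,
      B t i = ((2 : ℝ) ^ t - 1) / (P * h i) *
        (P * h i * (∑ l ∈ Finset.univ.filter (fun l => i < l), B t l) + σ2)) :
    StrictMonoOn (fun t => ∑ i, B t i) (Set.Ioi (0 : ℝ)) ∧
    ContinuousOn (fun t => ∑ i, B t i) (Set.Ioi (0 : ℝ)) ∧
    Tendsto (fun t => ∑ i, B t i) (nhdsWithin 0 (Set.Ioi (0 : ℝ)))
      (nhds 0) := by
  have hcont2 : Continuous fun t : ℝ => (2:ℝ) ^ t :=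
    continuous_iff_continuousAt.2 fun x => Real.continuousAt_const_rpow two_ne_zero
  have h2lt : ∀ {s t : ℝ}, s < t → (2:ℝ)^s < (2:ℝ)^t :=
    fun hst => (Real.rpow_lt_rpow_left_iff one_lt_two).2 hst
  have h2one : ∀ {t : ℝ}, 0 < t → (1:ℝ) < 2 ^ t := by
    intro t ht; simpa using (Real.rpow_lt_rpow_left_iff (x := (2:ℝ)) one_lt_two).2 ht
  have key : ∀ k : ℕ, ∀ i : Fin N, N ≤ i.val + k →
      StrictMonoOn (fun t => B t i) (Set.Ioi (0 : ℝ)) ∧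
      ContinuousOn (fun t => B t i) (Set.Ioi (0 : ℝ)) ∧
      Tendsto (fun t => B t i) (nhdsWithin 0 (Set.Ioi (0 : ℝ))) (nhds 0) ∧
      ∀ t ∈ Set.Ioi (0:ℝ), 0 ≤ B t i := by
    intro k
    induction k with
    | zero => intro i hi; exact absurd hi (by have := i.isLt; omega)
    | succ k ih =>
      intro i hi
      have ih' : ∀ l ∈ Finset.univ.filter (fun l => i < l),
          StrictMonoOn (fun t => B t l) (Set.Ioi (0 : ℝ)) ∧
          ContinuousOn (fun t => B t l) (Set.Ioi (0 : ℝ)) ∧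
          Tendsto (fun t => B t l) (nhdsWithin 0 (Set.Ioi (0 : ℝ))) (nhds 0) ∧
          ∀ t ∈ Set.Ioi (0:ℝ), 0 ≤ B t l := by
        intro l hl
        have hil : i < l := (Finset.mem_filter.mp hl).2
        exact ih l (by have := Fin.lt_iff_val_lt_val.mp hil; omega)
      set T : ℝ → ℝ := fun t => ∑ l ∈ Finset.univ.filter (fun l => i < l), B t l with hT
      have hTmono : MonotoneOn T (Set.Ioi (0:ℝ)) := by
        intro s hs t ht hst
        exact Finset.sum_le_sum fun l hl => ((ih' l hl).1.monotoneOn) hs ht hst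
      have hTcont : ContinuousOn T (Set.Ioi (0:ℝ)) :=
        continuousOn_finset_sum _ fun l hl => (ih' l hl).2.1
      have hT0 : Tendsto T (nhdsWithin 0 (Set.Ioi (0:ℝ))) (nhds 0) := by
        have := tendsto_finset_sum (Finset.univ.filter (fun l => i < l))
          (fun l hl => (ih' l hl).2.2.1)
        simpa using this
      have hTnn : ∀ t ∈ Set.Ioi (0:ℝ), 0 ≤ T t :=
        fun t ht => Finset.sum_nonneg fun l hl => (ih' l hl).2.2.2 t ht
      have hPh : 0 < P * h i := mul_pos hP (hh i)
      set g : ℝ → ℝ := fun t => ((2:ℝ)^t - 1) / (P * h i) with hgdef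
      set A : ℝ → ℝ := fun t => P * h i * T t + σ2 with hAdef
      have hBeq : ∀ t ∈ Set.Ioi (0:ℝ), B t i = g t * A t := fun t ht => hrec t ht i
      have hgpos : ∀ t ∈ Set.Ioi (0:ℝ), 0 < g t := fun t ht =>
        div_pos (by linarith [h2one ht]) hPh
      have hApos : ∀ t ∈ Set.Ioi (0:ℝ), 0 < A t := fun t ht => by
        have h1 := hTnn t ht
        have h2 : 0 ≤ P * h i * T t := by positivity
        simp only [hAdef]; linarith
      have hgcont : Continuous g := (hcont2.sub continuous_const).div_const _
      have hAcont : ContinuousOn A (Set.Ioi (0:ℝ)) :=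
        (continuousOn_const.mul hTcont).add continuousOn_const
      -- strict monotonicity of B · i
      have hsm : StrictMonoOn (fun t => B t i) (Set.Ioi (0:ℝ)) := by
        intro s hs t ht hst
        have hgs : g s < g t := by
          have := h2lt hst
          simp only [hgdef]
          gcongr
        have hAle : A s ≤ A t :=
          add_le_add (mul_le_mul_of_nonneg_left (hTmono hs ht hst.le) hPh.le) le_rfl
        calc B s i = g s * A s := hBeq s hs
          _ < g t * A s := mul_lt_mul_of_pos_right hgs (hApos s hs)
          _ ≤ g t * A t := mul_le_mul_of_nonneg_left hAle (hgpos t ht).le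
          _ = B t i := (hBeq t ht).symm
      have hcont : ContinuousOn (fun t => B t i) (Set.Ioi (0:ℝ)) :=
        ((hgcont.continuousOn.mul hAcont)).congr fun t ht => hBeq t ht
      have hg0 : Tendsto g (nhdsWithin 0 (Set.Ioi (0:ℝ))) (nhds 0) := by
        have h1 : Tendsto g (nhds 0) (nhds (g 0)) := hgcont.tendsto 0
        have h2 : g 0 = 0 := by simp [hgdef, Real.rpow_zero]
        rw [h2] at h1
        exact h1.mono_left nhdsWithin_le_nhds
      have hAt : Tendsto A (nhdsWithin 0 (Set.Ioi (0:ℝ))) (nhds (P * h i * 0 + σ2)) :=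
        (tendsto_const_nhds.mul hT0).add tendsto_const_nhds
      have htend : Tendsto (fun t => B t i) (nhdsWithin 0 (Set.Ioi (0:ℝ))) (nhds 0) := by
        have h1 : Tendsto (fun t => g t * A t) (nhdsWithin 0 (Set.Ioi (0:ℝ)))
            (nhds (0 * (P * h i * 0 + σ2))) := hg0.mul hAt
        rw [zero_mul] at h1
        exact h1.congr' (Filter.eventuallyEq_of_mem self_mem_nhdsWithin
          fun t ht => (hBeq t ht).symm)
      exact ⟨hsm, hcont, htend, fun t ht =>
        (hBeq t ht) ▸ (mul_pos (hgpos t ht) (hApos t ht)).le⟩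
  have key' : ∀ i : Fin N, _ := fun i => key N i (by omega)
  refine ⟨?_, ?_, ?_⟩
  · intro s hs t ht hst
    have : Nonempty (Fin N) := ⟨⟨0, hN⟩⟩
    exact Finset.sum_lt_sum_of_nonempty Finset.univ_nonempty
      fun i _ => (key' i).1 hs ht hst
  · exact continuousOn_finset_sum _ fun i _ => (key' i).2.1
  · have := tendsto_finset_sum (Finset.univ : Finset (Fin N))
      (fun i _ => (key' i).2.2.1)
    simpa using this
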